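/- Every commutative local ℂ-algebra R with dim_ℂ R = 5, dim_ℂ 𝔪_R² = 2 and dim_ℂ 𝔪_R³ = 1 (where 𝔪_R is the maximal ideal) is isomorphic as a ℂ-algebra either to R₂ = ℂ[S₁,S₂,S₃,S₄]/(S₁²−S₃, S₁S₂, S₂², S₁S₃−S₄, S₁S₄) or to R₃′ = ℂ[S₁,S₂,S₃,S₄]/(S₁²−S₃, S₁S₂, S₂²−S₄, S₁S₃−S₄, S₂S₃, S₁S₄). -/

import Mathlib

open MvPolynomial

/-- The ideal defining `R₂ = ℂ[S₁,S₂,S₃,S₄]/(S₁²−S₃, S₁S₂, S₂², S₁S₃−S₄, S₁S₄)`. -/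
noncomputable def I2 : Ideal (MvPolynomial (Fin 4) ℂ) :=
  Ideal.span {X 0 ^ 2 - X 2, X 0 * X 1, X 1 ^ 2, X 0 * X 2 - X 3, X 0 * X 3}

/-- The algebra `R₂`. -/
noncomputable abbrev R2 : Type := MvPolynomial (Fin 4) ℂ ⧸ I2

/-- The ideal defining `R₃′ = ℂ[S₁,S₂,S₃,S₄]/(S₁²−S₃, S₁S₂, S₂²−S₄, S₁S₃−S₄, S₂S₃, S₁S₄)`. -/
noncomputable def I3' : Ideal (MvPolynomial (Fin 4) ℂ) :=
  Ideal.span {X 0 ^ 2 - X 2, X 0 * X 1, X 1 ^ 2 - X 3, X 0 * X 2 - X 3, X 1 * X 2, X 0 * X 3}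

/-- The algebra `R₃′`. -/
noncomputable abbrev R3' : Type := MvPolynomial (Fin 4) ℂ ⧸ I3'


section Aux
open Submodule Module IsLocalRing

-- generic: quotient spanned by 1 and the images of variables, if products stay in span
lemma quot_span_aux (I : Ideal (MvPolynomial (Fin 4) ℂ))
    (h : ∀ i j : Fin 4, (Ideal.Quotient.mk I (X i * X j)) ∈
      span ℂ (Set.range ![(1 : MvPolynomial (Fin 4) ℂ ⧸ I), Ideal.Quotient.mk I (X 0),
        Ideal.Quotient.mk I (X 1), Ideal.Quotient.mk I (X 2), Ideal.Quotient.mk I (X 3)])) :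
    ⊤ ≤ span ℂ (Set.range ![(1 : MvPolynomial (Fin 4) ℂ ⧸ I), Ideal.Quotient.mk I (X 0),
        Ideal.Quotient.mk I (X 1), Ideal.Quotient.mk I (X 2), Ideal.Quotient.mk I (X 3)]) := by
  set f := ![(1 : MvPolynomial (Fin 4) ℂ ⧸ I), Ideal.Quotient.mk I (X 0),
        Ideal.Quotient.mk I (X 1), Ideal.Quotient.mk I (X 2), Ideal.Quotient.mk I (X 3)] with hf
  set P := span ℂ (Set.range f) with hP
  have hone : (1 : MvPolynomial (Fin 4) ℂ ⧸ I) ∈ P := subset_span ⟨0, rfl⟩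
  have hXi : ∀ i : Fin 4, Ideal.Quotient.mk I (X i) ∈ P := by
    intro i
    fin_cases i
    · exact subset_span ⟨1, rfl⟩
    · exact subset_span ⟨2, rfl⟩
    · exact subset_span ⟨3, rfl⟩
    · exact subset_span ⟨4, rfl⟩
  -- multiplication by X i preserves P
  have hmul : ∀ (i : Fin 4), ∀ w ∈ P, w * Ideal.Quotient.mk I (X i) ∈ P := by
    intro i w hw
    induction hw using Submodule.span_induction with
    | mem z hz =>
      obtain ⟨j, rfl⟩ := hz
      fin_cases j
      · simpa [hf] using hXi i
      · simpa [hf, ← map_mul] using h 0 i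
      · simpa [hf, ← map_mul] using h 1 i
      · simpa [hf, ← map_mul] using h 2 i
      · simpa [hf, ← map_mul] using h 3 i
    | zero => simpa using zero_mem P
    | add a b _ _ ha hb => simpa [add_mul] using add_mem ha hb
    | smul c a _ ha => simpa [smul_mul_assoc] using smul_mem P c ha
  intro z _
  obtain ⟨p, rfl⟩ := Ideal.Quotient.mk_surjective z
  induction p using MvPolynomial.induction_on with
  | C a =>
    have : Ideal.Quotient.mk I (C a) = a • (1 : MvPolynomial (Fin 4) ℂ ⧸ I) := by
      rw [show (C a : MvPolynomial (Fin 4) ℂ) = algebraMap ℂ _ a from rfl,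
        show Ideal.Quotient.mk I (algebraMap ℂ _ a) = algebraMap ℂ _ a from rfl,
        Algebra.algebraMap_eq_smul_one]
    rw [this]; exact smul_mem P a hone
  | add p q hp hq => simpa [map_add] using add_mem (hp trivial) (hq trivial)
  | mul_X p i hp => simpa [map_mul] using hmul i _ (hp trivial)

lemma I2_prods (i j : Fin 4) :
    Ideal.Quotient.mk I2 (X i * X j) ∈
      span ℂ (Set.range ![(1 : MvPolynomial (Fin 4) ℂ ⧸ I2), Ideal.Quotient.mk I2 (X 0),
        Ideal.Quotient.mk I2 (X 1), Ideal.Quotient.mk I2 (X 2), Ideal.Quotient.mk I2 (X 3)]) := by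
  have g1 : (X 0 ^ 2 - X 2 : MvPolynomial (Fin 4) ℂ) ∈ I2 := Ideal.subset_span (by simp)
  have g2 : (X 0 * X 1 : MvPolynomial (Fin 4) ℂ) ∈ I2 := Ideal.subset_span (by simp)
  have g3 : (X 1 ^ 2 : MvPolynomial (Fin 4) ℂ) ∈ I2 := Ideal.subset_span (by simp)
  have g4 : (X 0 * X 2 - X 3 : MvPolynomial (Fin 4) ℂ) ∈ I2 := Ideal.subset_span (by simp)
  have g5 : (X 0 * X 3 : MvPolynomial (Fin 4) ℂ) ∈ I2 := Ideal.subset_span (by simp)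
  have key : ∀ p : MvPolynomial (Fin 4) ℂ, p ∈ I2 → Ideal.Quotient.mk I2 p = 0 :=
    fun p hp => Ideal.Quotient.eq_zero_iff_mem.mpr hp
  fin_cases i <;> fin_cases j
  · show Ideal.Quotient.mk I2 (X 0 * X 0) ∈ _
    have e : (X 0 * X 0 - X 2 : MvPolynomial (Fin 4) ℂ) = X 0 ^ 2 - X 2 := by ring
    have hm : (X 0 * X 0 - X 2 : MvPolynomial (Fin 4) ℂ) ∈ I2 := by
      rw [e]; exact g1
    rw [Ideal.Quotient.eq.mpr hm]
    exact subset_span ⟨3, rfl⟩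
  · show Ideal.Quotient.mk I2 (X 0 * X 1) ∈ _
    have e : (X 0 * X 1 : MvPolynomial (Fin 4) ℂ) = X 0 * X 1 := by ring
    have hm : (X 0 * X 1 : MvPolynomial (Fin 4) ℂ) ∈ I2 := by
      rw [e]; exact g2
    rw [key _ hm]; exact zero_mem _
  · show Ideal.Quotient.mk I2 (X 0 * X 2) ∈ _
    have e : (X 0 * X 2 - X 3 : MvPolynomial (Fin 4) ℂ) = X 0 * X 2 - X 3 := by ring
    have hm : (X 0 * X 2 - X 3 : MvPolynomial (Fin 4) ℂ) ∈ I2 := by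
      rw [e]; exact g4
    rw [Ideal.Quotient.eq.mpr hm]
    exact subset_span ⟨4, rfl⟩
  · show Ideal.Quotient.mk I2 (X 0 * X 3) ∈ _
    have e : (X 0 * X 3 : MvPolynomial (Fin 4) ℂ) = X 0 * X 3 := by ring
    have hm : (X 0 * X 3 : MvPolynomial (Fin 4) ℂ) ∈ I2 := by
      rw [e]; exact g5
    rw [key _ hm]; exact zero_mem _
  · show Ideal.Quotient.mk I2 (X 1 * X 0) ∈ _
    have e : (X 1 * X 0 : MvPolynomial (Fin 4) ℂ) = X 0 * X 1 := by ring
    have hm : (X 1 * X 0 : MvPolynomial (Fin 4) ℂ) ∈ I2 := by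
      rw [e]; exact g2
    rw [key _ hm]; exact zero_mem _
  · show Ideal.Quotient.mk I2 (X 1 * X 1) ∈ _
    have e : (X 1 * X 1 : MvPolynomial (Fin 4) ℂ) = X 1 ^ 2 := by ring
    have hm : (X 1 * X 1 : MvPolynomial (Fin 4) ℂ) ∈ I2 := by
      rw [e]; exact g3
    rw [key _ hm]; exact zero_mem _
  · show Ideal.Quotient.mk I2 (X 1 * X 2) ∈ _
    have e : (X 1 * X 2 : MvPolynomial (Fin 4) ℂ) = X 0 * (X 0 * X 1) - X 1 * (X 0 ^ 2 - X 2) := by ring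
    have hm : (X 1 * X 2 : MvPolynomial (Fin 4) ℂ) ∈ I2 := by
      rw [e]; exact sub_mem (Ideal.mul_mem_left _ _ g2) (Ideal.mul_mem_left _ _ g1)
    rw [key _ hm]; exact zero_mem _
  · show Ideal.Quotient.mk I2 (X 1 * X 3) ∈ _
    have e : (X 1 * X 3 : MvPolynomial (Fin 4) ℂ) = X 2 * (X 0 * X 1) - X 1 * (X 0 * X 2 - X 3) := by ring
    have hm : (X 1 * X 3 : MvPolynomial (Fin 4) ℂ) ∈ I2 := by
      rw [e]; exact sub_mem (Ideal.mul_mem_left _ _ g2) (Ideal.mul_mem_left _ _ g4)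
    rw [key _ hm]; exact zero_mem _
  · show Ideal.Quotient.mk I2 (X 2 * X 0) ∈ _
    have e : (X 2 * X 0 - X 3 : MvPolynomial (Fin 4) ℂ) = X 0 * X 2 - X 3 := by ring
    have hm : (X 2 * X 0 - X 3 : MvPolynomial (Fin 4) ℂ) ∈ I2 := by
      rw [e]; exact g4
    rw [Ideal.Quotient.eq.mpr hm]
    exact subset_span ⟨4, rfl⟩
  · show Ideal.Quotient.mk I2 (X 2 * X 1) ∈ _
    have e : (X 2 * X 1 : MvPolynomial (Fin 4) ℂ) = X 0 * (X 0 * X 1) - X 1 * (X 0 ^ 2 - X 2) := by ring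
    have hm : (X 2 * X 1 : MvPolynomial (Fin 4) ℂ) ∈ I2 := by
      rw [e]; exact sub_mem (Ideal.mul_mem_left _ _ g2) (Ideal.mul_mem_left _ _ g1)
    rw [key _ hm]; exact zero_mem _
  · show Ideal.Quotient.mk I2 (X 2 * X 2) ∈ _
    have e : (X 2 * X 2 : MvPolynomial (Fin 4) ℂ) = X 0 * (X 0 * X 2 - X 3) + X 0 * X 3 - X 2 * (X 0 ^ 2 - X 2) := by ring
    have hm : (X 2 * X 2 : MvPolynomial (Fin 4) ℂ) ∈ I2 := by
      rw [e]; exact sub_mem (add_mem (Ideal.mul_mem_left _ _ g4) g5) (Ideal.mul_mem_left _ _ g1)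
    rw [key _ hm]; exact zero_mem _
  · show Ideal.Quotient.mk I2 (X 2 * X 3) ∈ _
    have e : (X 2 * X 3 : MvPolynomial (Fin 4) ℂ) = X 0 * (X 0 * X 3) - X 3 * (X 0 ^ 2 - X 2) := by ring
    have hm : (X 2 * X 3 : MvPolynomial (Fin 4) ℂ) ∈ I2 := by
      rw [e]; exact sub_mem (Ideal.mul_mem_left _ _ g5) (Ideal.mul_mem_left _ _ g1)
    rw [key _ hm]; exact zero_mem _
  · show Ideal.Quotient.mk I2 (X 3 * X 0) ∈ _
    have e : (X 3 * X 0 : MvPolynomial (Fin 4) ℂ) = X 0 * X 3 := by ring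
    have hm : (X 3 * X 0 : MvPolynomial (Fin 4) ℂ) ∈ I2 := by
      rw [e]; exact g5
    rw [key _ hm]; exact zero_mem _
  · show Ideal.Quotient.mk I2 (X 3 * X 1) ∈ _
    have e : (X 3 * X 1 : MvPolynomial (Fin 4) ℂ) = X 2 * (X 0 * X 1) - X 1 * (X 0 * X 2 - X 3) := by ring
    have hm : (X 3 * X 1 : MvPolynomial (Fin 4) ℂ) ∈ I2 := by
      rw [e]; exact sub_mem (Ideal.mul_mem_left _ _ g2) (Ideal.mul_mem_left _ _ g4)
    rw [key _ hm]; exact zero_mem _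
  · show Ideal.Quotient.mk I2 (X 3 * X 2) ∈ _
    have e : (X 3 * X 2 : MvPolynomial (Fin 4) ℂ) = X 0 * (X 0 * X 3) - X 3 * (X 0 ^ 2 - X 2) := by ring
    have hm : (X 3 * X 2 : MvPolynomial (Fin 4) ℂ) ∈ I2 := by
      rw [e]; exact sub_mem (Ideal.mul_mem_left _ _ g5) (Ideal.mul_mem_left _ _ g1)
    rw [key _ hm]; exact zero_mem _
  · show Ideal.Quotient.mk I2 (X 3 * X 3) ∈ _
    have e : (X 3 * X 3 : MvPolynomial (Fin 4) ℂ) = X 2 * (X 0 * X 3) - X 3 * (X 0 * X 2 - X 3) := by ring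
    have hm : (X 3 * X 3 : MvPolynomial (Fin 4) ℂ) ∈ I2 := by
      rw [e]; exact sub_mem (Ideal.mul_mem_left _ _ g5) (Ideal.mul_mem_left _ _ g4)
    rw [key _ hm]; exact zero_mem _

lemma I3'_prods (i j : Fin 4) :
    Ideal.Quotient.mk I3' (X i * X j) ∈
      span ℂ (Set.range ![(1 : MvPolynomial (Fin 4) ℂ ⧸ I3'), Ideal.Quotient.mk I3' (X 0),
        Ideal.Quotient.mk I3' (X 1), Ideal.Quotient.mk I3' (X 2), Ideal.Quotient.mk I3' (X 3)]) := by
  have g1 : (X 0 ^ 2 - X 2 : MvPolynomial (Fin 4) ℂ) ∈ I3' := Ideal.subset_span (by simp)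
  have g2 : (X 0 * X 1 : MvPolynomial (Fin 4) ℂ) ∈ I3' := Ideal.subset_span (by simp)
  have g3 : (X 1 ^ 2 - X 3 : MvPolynomial (Fin 4) ℂ) ∈ I3' := Ideal.subset_span (by simp)
  have g4 : (X 0 * X 2 - X 3 : MvPolynomial (Fin 4) ℂ) ∈ I3' := Ideal.subset_span (by simp)
  have g5 : (X 1 * X 2 : MvPolynomial (Fin 4) ℂ) ∈ I3' := Ideal.subset_span (by simp)
  have g6 : (X 0 * X 3 : MvPolynomial (Fin 4) ℂ) ∈ I3' := Ideal.subset_span (by simp)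
  have key : ∀ p : MvPolynomial (Fin 4) ℂ, p ∈ I3' → Ideal.Quotient.mk I3' p = 0 :=
    fun p hp => Ideal.Quotient.eq_zero_iff_mem.mpr hp
  fin_cases i <;> fin_cases j
  · show Ideal.Quotient.mk I3' (X 0 * X 0) ∈ _
    have e : (X 0 * X 0 - X 2 : MvPolynomial (Fin 4) ℂ) = X 0 ^ 2 - X 2 := by ring
    have hm : (X 0 * X 0 - X 2 : MvPolynomial (Fin 4) ℂ) ∈ I3' := by
      rw [e]; exact g1
    rw [Ideal.Quotient.eq.mpr hm]
    exact subset_span ⟨3, rfl⟩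
  · show Ideal.Quotient.mk I3' (X 0 * X 1) ∈ _
    have e : (X 0 * X 1 : MvPolynomial (Fin 4) ℂ) = X 0 * X 1 := by ring
    have hm : (X 0 * X 1 : MvPolynomial (Fin 4) ℂ) ∈ I3' := by
      rw [e]; exact g2
    rw [key _ hm]; exact zero_mem _
  · show Ideal.Quotient.mk I3' (X 0 * X 2) ∈ _
    have e : (X 0 * X 2 - X 3 : MvPolynomial (Fin 4) ℂ) = X 0 * X 2 - X 3 := by ring
    have hm : (X 0 * X 2 - X 3 : MvPolynomial (Fin 4) ℂ) ∈ I3' := by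
      rw [e]; exact g4
    rw [Ideal.Quotient.eq.mpr hm]
    exact subset_span ⟨4, rfl⟩
  · show Ideal.Quotient.mk I3' (X 0 * X 3) ∈ _
    have e : (X 0 * X 3 : MvPolynomial (Fin 4) ℂ) = X 0 * X 3 := by ring
    have hm : (X 0 * X 3 : MvPolynomial (Fin 4) ℂ) ∈ I3' := by
      rw [e]; exact g6
    rw [key _ hm]; exact zero_mem _
  · show Ideal.Quotient.mk I3' (X 1 * X 0) ∈ _
    have e : (X 1 * X 0 : MvPolynomial (Fin 4) ℂ) = X 0 * X 1 := by ring
    have hm : (X 1 * X 0 : MvPolynomial (Fin 4) ℂ) ∈ I3' := by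
      rw [e]; exact g2
    rw [key _ hm]; exact zero_mem _
  · show Ideal.Quotient.mk I3' (X 1 * X 1) ∈ _
    have e : (X 1 * X 1 - X 3 : MvPolynomial (Fin 4) ℂ) = X 1 ^ 2 - X 3 := by ring
    have hm : (X 1 * X 1 - X 3 : MvPolynomial (Fin 4) ℂ) ∈ I3' := by
      rw [e]; exact g3
    rw [Ideal.Quotient.eq.mpr hm]
    exact subset_span ⟨4, rfl⟩
  · show Ideal.Quotient.mk I3' (X 1 * X 2) ∈ _
    have e : (X 1 * X 2 : MvPolynomial (Fin 4) ℂ) = X 1 * X 2 := by ring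
    have hm : (X 1 * X 2 : MvPolynomial (Fin 4) ℂ) ∈ I3' := by
      rw [e]; exact g5
    rw [key _ hm]; exact zero_mem _
  · show Ideal.Quotient.mk I3' (X 1 * X 3) ∈ _
    have e : (X 1 * X 3 : MvPolynomial (Fin 4) ℂ) = X 0 * (X 1 * X 2) - X 1 * (X 0 * X 2 - X 3) := by ring
    have hm : (X 1 * X 3 : MvPolynomial (Fin 4) ℂ) ∈ I3' := by
      rw [e]; exact sub_mem (Ideal.mul_mem_left _ _ g5) (Ideal.mul_mem_left _ _ g4)
    rw [key _ hm]; exact zero_mem _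
  · show Ideal.Quotient.mk I3' (X 2 * X 0) ∈ _
    have e : (X 2 * X 0 - X 3 : MvPolynomial (Fin 4) ℂ) = X 0 * X 2 - X 3 := by ring
    have hm : (X 2 * X 0 - X 3 : MvPolynomial (Fin 4) ℂ) ∈ I3' := by
      rw [e]; exact g4
    rw [Ideal.Quotient.eq.mpr hm]
    exact subset_span ⟨4, rfl⟩
  · show Ideal.Quotient.mk I3' (X 2 * X 1) ∈ _
    have e : (X 2 * X 1 : MvPolynomial (Fin 4) ℂ) = X 1 * X 2 := by ring
    have hm : (X 2 * X 1 : MvPolynomial (Fin 4) ℂ) ∈ I3' := by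
      rw [e]; exact g5
    rw [key _ hm]; exact zero_mem _
  · show Ideal.Quotient.mk I3' (X 2 * X 2) ∈ _
    have e : (X 2 * X 2 : MvPolynomial (Fin 4) ℂ) = X 0 * (X 0 * X 2 - X 3) + X 0 * X 3 - X 2 * (X 0 ^ 2 - X 2) := by ring
    have hm : (X 2 * X 2 : MvPolynomial (Fin 4) ℂ) ∈ I3' := by
      rw [e]; exact sub_mem (add_mem (Ideal.mul_mem_left _ _ g4) g6) (Ideal.mul_mem_left _ _ g1)
    rw [key _ hm]; exact zero_mem _
  · show Ideal.Quotient.mk I3' (X 2 * X 3) ∈ _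
    have e : (X 2 * X 3 : MvPolynomial (Fin 4) ℂ) = X 0 * (X 0 * X 3) - X 3 * (X 0 ^ 2 - X 2) := by ring
    have hm : (X 2 * X 3 : MvPolynomial (Fin 4) ℂ) ∈ I3' := by
      rw [e]; exact sub_mem (Ideal.mul_mem_left _ _ g6) (Ideal.mul_mem_left _ _ g1)
    rw [key _ hm]; exact zero_mem _
  · show Ideal.Quotient.mk I3' (X 3 * X 0) ∈ _
    have e : (X 3 * X 0 : MvPolynomial (Fin 4) ℂ) = X 0 * X 3 := by ring
    have hm : (X 3 * X 0 : MvPolynomial (Fin 4) ℂ) ∈ I3' := by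
      rw [e]; exact g6
    rw [key _ hm]; exact zero_mem _
  · show Ideal.Quotient.mk I3' (X 3 * X 1) ∈ _
    have e : (X 3 * X 1 : MvPolynomial (Fin 4) ℂ) = X 0 * (X 1 * X 2) - X 1 * (X 0 * X 2 - X 3) := by ring
    have hm : (X 3 * X 1 : MvPolynomial (Fin 4) ℂ) ∈ I3' := by
      rw [e]; exact sub_mem (Ideal.mul_mem_left _ _ g5) (Ideal.mul_mem_left _ _ g4)
    rw [key _ hm]; exact zero_mem _
  · show Ideal.Quotient.mk I3' (X 3 * X 2) ∈ _
    have e : (X 3 * X 2 : MvPolynomial (Fin 4) ℂ) = X 0 * (X 0 * X 3) - X 3 * (X 0 ^ 2 - X 2) := by ring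
    have hm : (X 3 * X 2 : MvPolynomial (Fin 4) ℂ) ∈ I3' := by
      rw [e]; exact sub_mem (Ideal.mul_mem_left _ _ g6) (Ideal.mul_mem_left _ _ g1)
    rw [key _ hm]; exact zero_mem _
  · show Ideal.Quotient.mk I3' (X 3 * X 3) ∈ _
    have e : (X 3 * X 3 : MvPolynomial (Fin 4) ℂ) = X 2 * (X 0 * X 3) - X 3 * (X 0 * X 2 - X 3) := by ring
    have hm : (X 3 * X 3 : MvPolynomial (Fin 4) ℂ) ∈ I3' := by
      rw [e]; exact sub_mem (Ideal.mul_mem_left _ _ g6) (Ideal.mul_mem_left _ _ g4)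
    rw [key _ hm]; exact zero_mem _

lemma iso_of_quot (I : Ideal (MvPolynomial (Fin 4) ℂ))
    (hprods : ⊤ ≤ span ℂ (Set.range ![(1 : MvPolynomial (Fin 4) ℂ ⧸ I), Ideal.Quotient.mk I (X 0),
        Ideal.Quotient.mk I (X 1), Ideal.Quotient.mk I (X 2), Ideal.Quotient.mk I (X 3)]))
    {R : Type} [CommRing R] [Algebra ℂ R] (x y : R) (h5 : finrank ℂ R = 5)
    (hspan : ⊤ ≤ span ℂ (Set.range ![1, x, y, x*x, x*x*x]))
    (hker : ∀ p ∈ I, aeval ![x, y, x*x, x*x*x] p = 0) :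
    Nonempty (R ≃ₐ[ℂ] (MvPolynomial (Fin 4) ℂ ⧸ I)) := by
  set ψ : MvPolynomial (Fin 4) ℂ →ₐ[ℂ] R := aeval ![x, y, x*x, x*x*x] with hψ
  set φ : (MvPolynomial (Fin 4) ℂ ⧸ I) →ₐ[ℂ] R := Ideal.Quotient.liftₐ I ψ hker with hφ
  have hφmk : ∀ p, φ (Ideal.Quotient.mk I p) = ψ p := fun p => Ideal.Quotient.liftₐ_apply _ _ _ _
  set e : Fin 5 → R := ![1, x, y, x*x, x*x*x] with he
  set f : Fin 5 → (MvPolynomial (Fin 4) ℂ ⧸ I) :=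
    ![1, Ideal.Quotient.mk I (X 0), Ideal.Quotient.mk I (X 1), Ideal.Quotient.mk I (X 2),
      Ideal.Quotient.mk I (X 3)] with hfdef
  have hφf : ∀ i, φ (f i) = e i := by
    intro i
    fin_cases i
    · simpa [hfdef, he] using map_one φ
    · simpa [hfdef, he, hφmk] using (by simp [hψ] : ψ (X 0) = x)
    · simpa [hfdef, he, hφmk] using (by simp [hψ] : ψ (X 1) = y)
    · simpa [hfdef, he, hφmk] using (by simp [hψ] : ψ (X 2) = x*x)
    · simpa [hfdef, he, hφmk] using (by simp [hψ] : ψ (X 3) = x*x*x)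
  have card : Fintype.card (Fin 5) = finrank ℂ R := by simp [h5]
  have hli : LinearIndependent ℂ e := by
    have := (basisOfTopLeSpanOfCardEqFinrank e hspan card).linearIndependent
    rwa [coe_basisOfTopLeSpanOfCardEqFinrank e hspan card] at this
  have hinj : Function.Injective φ := by
    rw [injective_iff_map_eq_zero]
    intro z hz
    obtain ⟨c, hc⟩ := mem_span_range_iff_exists_fun ℂ |>.mp (hprods trivial : z ∈ _)
    have h0 : ∑ i, c i • e i = 0 := by
      have := congrArg φ hc
      simpa [map_sum, hφf, hz] using this
    have hc0 := Fintype.linearIndependent_iff.mp hli c h0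
    rw [← hc]
    simp [hc0]
  have hsurj : Function.Surjective φ := by
    intro r
    have hr : r ∈ span ℂ (Set.range e) := hspan trivial
    obtain ⟨c, hc⟩ := mem_span_range_iff_exists_fun ℂ |>.mp hr
    refine ⟨∑ i, c i • f i, ?_⟩
    rw [map_sum]
    simpa [hφf] using hc
  exact ⟨(AlgEquiv.ofBijective φ ⟨hinj, hsurj⟩).symm⟩

end Aux

open Submodule Module IsLocalRing in
/-- Every commutative local ℂ-algebra `R` with `dim_ℂ R = 5`, `dim_ℂ 𝔪² = 2` and
`dim_ℂ 𝔪³ = 1` is isomorphic as a ℂ-algebra to `R₂` or to `R₃′`. -/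
theorem stmt0 (R : Type) [CommRing R] [IsLocalRing R] [Algebra ℂ R]
    (h5 : Module.finrank ℂ R = 5)
    (h2 : Module.finrank ℂ
      (Submodule.restrictScalars ℂ ((IsLocalRing.maximalIdeal R) ^ 2)) = 2)
    (h3 : Module.finrank ℂ
      (Submodule.restrictScalars ℂ ((IsLocalRing.maximalIdeal R) ^ 3)) = 1) :
    Nonempty (R ≃ₐ[ℂ] R2) ∨ Nonempty (R ≃ₐ[ℂ] R3') := by
  haveI : FiniteDimensional ℂ R := FiniteDimensional.of_finrank_eq_succ h5
  set m : Ideal R := maximalIdeal R with hm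
  -- every element is a scalar plus an element of m
  have hres : ∀ r : R, ∃ c : ℂ, r - algebraMap ℂ R c ∈ m := by
    haveI : Module.Finite ℂ (R ⧸ m) :=
      Module.Finite.of_surjective (Ideal.Quotient.mkₐ ℂ m).toLinearMap
        (Ideal.Quotient.mkₐ_surjective ℂ _)
    haveI : Algebra.IsIntegral ℂ (R ⧸ m) := Algebra.IsIntegral.of_finite ℂ _
    have hsurj := (IsAlgClosed.algebraMap_bijective_of_isIntegral (k := ℂ) (K := (R ⧸ m))).2
    intro r
    obtain ⟨c, hc⟩ := hsurj (Ideal.Quotient.mk m r)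
    refine ⟨c, ?_⟩
    have h0 : Ideal.Quotient.mk m (r - algebraMap ℂ R c) = 0 := by
      rw [map_sub, ← hc]
      rw [show Ideal.Quotient.mk m (algebraMap ℂ R c) = algebraMap ℂ (R ⧸ m) c from rfl,
        sub_self]
    exact Ideal.Quotient.eq_zero_iff_mem.mp h0
  -- there is x ∈ m with nonzero cube
  have hcube : ∃ x ∈ m, x * x * x ≠ 0 := by
    by_contra hc
    push_neg at hc
    have hmul3 : m * m * m ≤ ⊥ := by
      rw [Ideal.mul_le]
      intro r hr s hs
      refine Submodule.mul_induction_on hr ?_ ?_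
      · intro a ha b hb
        have hu : IsUnit ((6 : R)) := by
          rw [← map_ofNat (algebraMap ℂ R) 6]
          exact (isUnit_iff_ne_zero.mpr (by norm_num)).map _
        have e : (6 : R) * (a * b * s) =
            (a+b+s)*(a+b+s)*(a+b+s) - (a+b)*(a+b)*(a+b) - (a+s)*(a+s)*(a+s)
              - (b+s)*(b+s)*(b+s) + a*a*a + b*b*b + s*s*s := by ring
        rw [hc _ (add_mem (add_mem ha hb) hs), hc _ (add_mem ha hb), hc _ (add_mem ha hs),
          hc _ (add_mem hb hs), hc _ ha, hc _ hb, hc _ hs] at e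
        simp only [sub_zero, add_zero, zero_sub, neg_zero, zero_add, sub_self] at e
        have : a * b * s = 0 := (hu.mul_right_eq_zero).mp e
        simpa [Ideal.mem_bot] using this
      · intro u v hu hv
        have : (u + v) * s = u * s + v * s := by ring
        rw [Ideal.mem_bot] at *
        rw [this, hu, hv, add_zero]
    have h30 : m ^ 3 = ⊥ := by
      refine le_bot_iff.mp ?_
      have : m ^ 3 = m * m * m := by ring
      rw [this]; exact hmul3
    rw [h30] at h3
    rw [Submodule.restrictScalars_bot, finrank_bot] at h3
    simp at h3
  obtain ⟨x, hxm, hx3⟩ := hcube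
  -- memberships of powers
  have hx2m : x * x ∈ m ^ 2 := by rw [pow_two]; exact Ideal.mul_mem_mul hxm hxm
  have hx3m : x * x * x ∈ m ^ 3 := by
    rw [pow_succ]; exact Ideal.mul_mem_mul hx2m hxm
  -- m^3 as a ℂ-subspace is spanned by x³
  have hM3 : Submodule.restrictScalars ℂ (m ^ 3) = span ℂ {x * x * x} := by
    refine (eq_of_le_of_finrank_le (span_le.mpr ?_) ?_).symm
    · simpa using hx3m
    · rw [h3, finrank_span_singleton hx3]
  -- m^3 as an ideal is generated by x³
  have hI3 : m ^ 3 = Ideal.span {x * x * x} := by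
    apply le_antisymm
    · intro z hz
      have hz' : z ∈ span ℂ {x * x * x} := by rw [← hM3]; exact hz
      obtain ⟨c, hc⟩ := mem_span_singleton.mp hz'
      rw [← hc, Algebra.smul_def]
      exact Ideal.mul_mem_left _ _ (Ideal.subset_span rfl)
    · rw [Ideal.span_le]
      simpa using hx3m
  -- m^4 = 0 (as a subspace), so x⁴ = 0
  have hx4 : x * x * x * x = 0 := by
    have hne : m ^ 4 ≠ m ^ 3 := by
      intro h
      have hfg : (m ^ 3).FG := by rw [hI3]; exact fg_span_singleton _
      have hb : m ^ 3 = ⊥ := by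
        refine Submodule.eq_bot_of_le_smul_of_le_jacobson_bot m _ hfg ?_ ?_
        · rw [Ideal.smul_eq_mul]
          calc m ^ 3 = m ^ 4 := h.symm
          _ = m * m ^ 3 := by ring
          _ ≤ m * m ^ 3 := le_rfl
        · rw [IsLocalRing.jacobson_eq_maximalIdeal ⊥ bot_ne_top]
      rw [hb] at h3; rw [Submodule.restrictScalars_bot, finrank_bot] at h3; simp at h3
    have hlt : Submodule.restrictScalars ℂ (m ^ 4) < Submodule.restrictScalars ℂ (m ^ 3) := by
      refine lt_of_le_of_ne ?_ ?_
      · exact fun z hz => Ideal.pow_le_pow_right (by norm_num) hz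
      · intro h
        exact hne (Submodule.restrictScalars_injective ℂ _ _ h)
    have hfr : finrank ℂ (Submodule.restrictScalars ℂ (m ^ 4)) = 0 := by
      have := finrank_lt_finrank_of_lt hlt
      omega
    have hbot : Submodule.restrictScalars ℂ (m ^ 4) = ⊥ := finrank_eq_zero.mp hfr
    have hx4m : x * x * x * x ∈ m ^ 4 := by
      rw [pow_succ]; exact Ideal.mul_mem_mul hx3m hxm
    have : x * x * x * x ∈ Submodule.restrictScalars ℂ (m ^ 4) := hx4m
    rw [hbot] at this
    simpa using this
  have hm2le : m ^ 2 ≤ m := by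
    intro z hz
    have := Ideal.pow_le_pow_right (by norm_num : 1 ≤ 2) hz
    rwa [pow_one] at this
  have hm3le2 : m ^ 3 ≤ m ^ 2 := Ideal.pow_le_pow_right (by norm_num)
  have hm3le : m ^ 3 ≤ m := fun z hz => hm2le (hm3le2 hz)
  have hx5 : x * x * (x * x) = 0 := by
    have e : x * x * (x * x) = x * x * x * x := by ring
    rw [e, hx4]
  have hx6 : x * x * (x * x * x) = 0 := by
    have e : x * x * (x * x * x) = x * x * x * x * x := by ring
    rw [e, hx4, zero_mul]
  -- independence of x², x³
  have hli2 : LinearIndependent ℂ ![x * x, x * x * x] := by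
    rw [Fintype.linearIndependent_iff]
    intro g hg
    rw [Fin.sum_univ_two] at hg
    simp only [Matrix.cons_val_zero, Matrix.cons_val_one, Matrix.head_cons] at hg
    have h1 : g 0 • (x * x * x) = 0 := by
      have := congrArg (fun z => x * z) hg
      simpa [mul_add, mul_smul_comm, show x * (x * x) = x * x * x by ring,
        show x * (x * x * x) = x * x * x * x by ring, hx4] using this
    have hg0 : g 0 = 0 := by
      rcases smul_eq_zero.mp h1 with h | h
      · exact h
      · exact absurd h hx3
    have h2' : g 1 • (x * x * x) = 0 := by
      rw [hg0, zero_smul, zero_add] at hg; exact hg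
    have hg1 : g 1 = 0 := by
      rcases smul_eq_zero.mp h2' with h | h
      · exact h
      · exact absurd h hx3
    intro i; fin_cases i
    · exact hg0
    · exact hg1
  -- m² as subspace is spanned by x², x³
  have hM2 : Submodule.restrictScalars ℂ (m ^ 2) = span ℂ (Set.range ![x * x, x * x * x]) := by
    refine (eq_of_le_of_finrank_le (span_le.mpr ?_) ?_).symm
    · intro z hz
      simp only [Matrix.range_cons, Matrix.range_empty, Set.union_empty,
        Set.union_singleton] at hz
      rcases hz with rfl | rfl <;> first | exact hx2m | exact hm3le2 hx3m
    · rw [h2, finrank_span_eq_card hli2]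
      simp
  -- finrank of m is 4
  have hM1 : finrank ℂ (Submodule.restrictScalars ℂ m) = 4 := by
    have hsup : Submodule.restrictScalars ℂ m ⊔ span ℂ {(1 : R)} = ⊤ := by
      rw [eq_top_iff]
      intro r _
      obtain ⟨c, hc⟩ := hres r
      have : r = (r - algebraMap ℂ R c) + c • (1 : R) := by
        rw [Algebra.algebraMap_eq_smul_one]
        abel
      rw [this]
      exact add_mem (mem_sup_left hc) (mem_sup_right (smul_mem _ c (mem_span_singleton_self _)))
    have hinf : Submodule.restrictScalars ℂ m ⊓ span ℂ {(1 : R)} = ⊥ := by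
      rw [eq_bot_iff]
      rintro z ⟨hz1, hz2⟩
      obtain ⟨c, hc⟩ := mem_span_singleton.mp hz2
      rcases eq_or_ne c 0 with rfl | hcne
      · simp only [zero_smul] at hc
        simpa using hc.symm
      · exfalso
        have h1m : (1 : R) ∈ m := by
          have : (1 : R) = c⁻¹ • z := by rw [← hc, smul_smul, inv_mul_cancel₀ hcne, one_smul]
          rw [this, Algebra.smul_def]
          exact Ideal.mul_mem_left _ _ hz1
        exact (Ideal.ne_top_iff_one m).mp (IsLocalRing.maximalIdeal.isMaximal R).ne_top h1m
    have := finrank_sup_add_finrank_inf_eq (Submodule.restrictScalars ℂ m) (span ℂ {(1 : R)})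
    rw [hsup, hinf, finrank_top, h5, finrank_bot, finrank_span_singleton (one_ne_zero)] at this
    omega
  -- pick y₀ ∈ m outside W = span{x, x², x³}
  set W : Submodule ℂ R := span ℂ (Set.range ![x, x * x, x * x * x]) with hW
  have hxW : x ∈ W := subset_span ⟨0, rfl⟩
  have hx2W : x * x ∈ W := subset_span ⟨1, rfl⟩
  have hWrank : finrank ℂ W ≤ 3 := by
    have := finrank_range_le_card (R := ℂ) ![x, x * x, x * x * x]
    simpa [Set.finrank] using this
  have hy0 : ∃ y₀, y₀ ∈ Submodule.restrictScalars ℂ m ∧ y₀ ∉ W := by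
    by_contra hcon
    push_neg at hcon
    have hle : Submodule.restrictScalars ℂ m ≤ W := fun z hz => hcon z hz
    have := Submodule.finrank_mono hle
    omega
  obtain ⟨y₀, hy₀m, hy₀W⟩ := hy0
  -- xy₀ ∈ m², write it in terms of x², x³
  have hxy₀ : x * y₀ ∈ span ℂ (Set.range ![x * x, x * x * x]) := by
    rw [← hM2]
    show x * y₀ ∈ m ^ 2
    rw [pow_two]; exact Ideal.mul_mem_mul hxm hy₀m
  obtain ⟨c, hc⟩ := (mem_span_range_iff_exists_fun ℂ).mp hxy₀
  rw [Fin.sum_univ_two] at hc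
  simp only [Matrix.cons_val_zero, Matrix.cons_val_one, Matrix.head_cons] at hc
  set y₁ : R := y₀ - c 0 • x - c 1 • (x * x) with hy₁
  have hy₁m : y₁ ∈ m := by
    refine sub_mem (sub_mem hy₀m ?_) ?_
    · rw [Algebra.smul_def]; exact Ideal.mul_mem_left _ _ hxm
    · rw [Algebra.smul_def]; exact Ideal.mul_mem_left _ _ (hm2le hx2m)
  have hxy₁ : x * y₁ = 0 := by
    rw [hy₁, mul_sub, mul_sub, mul_smul_comm, mul_smul_comm, ← hc,
      show x * (x * x) = x * x * x by ring]
    abel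
  have hy₁W : y₁ ∉ W := by
    intro h
    apply hy₀W
    have : y₀ = y₁ + c 0 • x + c 1 • (x * x) := by rw [hy₁]; abel
    rw [this]
    exact add_mem (add_mem h (smul_mem _ _ hxW)) (smul_mem _ _ hx2W)
  -- y₁² = d • x³
  have hy₁sq : ∃ d : ℂ, y₁ * y₁ = d • (x * x * x) := by
    have hsq : y₁ * y₁ ∈ span ℂ (Set.range ![x * x, x * x * x]) := by
      rw [← hM2]
      show y₁ * y₁ ∈ m ^ 2
      rw [pow_two]; exact Ideal.mul_mem_mul hy₁m hy₁m
    obtain ⟨d, hd⟩ := (mem_span_range_iff_exists_fun ℂ).mp hsq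
    rw [Fin.sum_univ_two] at hd
    simp only [Matrix.cons_val_zero, Matrix.cons_val_one, Matrix.head_cons] at hd
    have hx0 : x * (y₁ * y₁) = 0 := by
      rw [show x * (y₁ * y₁) = (x * y₁) * y₁ by ring, hxy₁, zero_mul]
    have h00 : d 0 • (x * x * x) = 0 := by
      have h01 := congrArg (fun z => x * z) hd.symm
      simp only [mul_add, mul_smul_comm, hx0, show x * (x * x) = x * x * x from by ring,
        show x * (x * x * x) = x * x * x * x from by ring, hx4, smul_zero, add_zero] at h01
      exact h01.symm
    rcases smul_eq_zero.mp h00 with h | h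
    · exact ⟨d 1, by rw [← hd, h, zero_smul, zero_add]⟩
    · exact absurd h hx3
  obtain ⟨d, hd⟩ := hy₁sq
  -- general span lemma given final y
  have hspan_gen : ∀ y : R, y ∈ m → y ∉ W →
      ⊤ ≤ span ℂ (Set.range ![1, x, y, x * x, x * x * x]) := by
    intro y hym hyW
    have hli4 : LinearIndependent ℂ ![x, y, x * x, x * x * x] := by
      rw [Fintype.linearIndependent_iff]
      intro g hg
      rw [Fin.sum_univ_four] at hg
      simp only [Matrix.cons_val_zero, Matrix.cons_val_one, Matrix.head_cons,
        Matrix.cons_val_two, Matrix.tail_cons, Matrix.cons_val_three] at hg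
      have hg1 : g 1 = 0 := by
        by_contra hg1
        apply hyW
        have hy : y = (g 1)⁻¹ • (g 1 • y) := by rw [smul_smul, inv_mul_cancel₀ hg1, one_smul]
        have he : g 1 • y = -(g 0 • x) - g 2 • (x * x) - g 3 • (x * x * x) := by
          have := hg
          rw [show g 0 • x + g 1 • y + g 2 • (x*x) + g 3 • (x*x*x)
            = g 1 • y + (g 0 • x + g 2 • (x*x) + g 3 • (x*x*x)) by abel] at this
          have := eq_neg_of_add_eq_zero_left this
          rw [this]; abel
        rw [hy, he]
        refine smul_mem _ _ (sub_mem (sub_mem (neg_mem (smul_mem _ _ hxW)) (smul_mem _ _ hx2W))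
          (smul_mem _ _ (subset_span ⟨2, rfl⟩)))
      rw [hg1, zero_smul, add_zero] at hg
      have hg0 : g 0 = 0 := by
        have := congrArg (fun z => x * x * z) hg
        simp only [mul_add, mul_smul_comm, mul_zero, hx5, hx6, smul_zero, add_zero,
          show x * x * x = x * x * x from rfl] at this
        have h' : g 0 • (x * x * x) = 0 := by
          simpa [show x * x * x = x * x * x from rfl, mul_assoc] using this
        rcases smul_eq_zero.mp h' with h | h
        · exact h
        · exact absurd h hx3
      rw [hg0, zero_smul, zero_add] at hg
      have := Fintype.linearIndependent_iff.mp hli2 ![g 2, g 3] (by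
        rw [Fin.sum_univ_two]
        simpa using hg)
      intro i; fin_cases i
      · exact hg0
      · exact hg1
      · simpa using this 0
      · simpa using this 1
    have hVeq : span ℂ (Set.range ![x, y, x * x, x * x * x]) = Submodule.restrictScalars ℂ m := by
      refine eq_of_le_of_finrank_le (span_le.mpr ?_) ?_
      · intro z hz
        simp only [Matrix.range_cons, Matrix.range_empty, Set.union_empty,
          Set.union_singleton] at hz
        rcases hz with rfl | rfl | rfl | rfl <;>
          first
          | exact hxm
          | exact hym
          | exact hm2le hx2m
          | exact hm3le hx3m
      · rw [hM1, finrank_span_eq_card hli4]; simp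
    intro r _
    obtain ⟨cc, hcc⟩ := hres r
    have h1 : r - algebraMap ℂ R cc ∈ span ℂ (Set.range ![x, y, x * x, x * x * x]) := by
      rw [hVeq]; exact hcc
    have hsub : span ℂ (Set.range ![x, y, x * x, x * x * x])
        ≤ span ℂ (Set.range ![1, x, y, x * x, x * x * x]) := by
      refine span_le.mpr ?_
      intro z hz
      simp only [Matrix.range_cons, Matrix.range_empty, Set.union_empty,
        Set.union_singleton] at hz
      rcases hz with rfl | rfl | rfl | rfl <;>
        first
        | exact subset_span ⟨1, rfl⟩
        | exact subset_span ⟨2, rfl⟩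
        | exact subset_span ⟨3, rfl⟩
        | exact subset_span ⟨4, rfl⟩
    have h2' : r = (r - algebraMap ℂ R cc) + cc • (1 : R) := by
      rw [Algebra.algebraMap_eq_smul_one]; abel
    rw [h2']
    exact add_mem (hsub h1) (smul_mem _ _ (subset_span ⟨0, rfl⟩))
  rcases eq_or_ne d 0 with rfl | hdne
  · -- R2 case
    left
    rw [zero_smul] at hd
    refine iso_of_quot I2 (quot_span_aux I2 I2_prods) x y₁ h5 (hspan_gen y₁ hy₁m hy₁W) ?_
    intro p hp
    have hle : I2 ≤ RingHom.ker (aeval ![x, y₁, x*x, x*x*x] : MvPolynomial (Fin 4) ℂ →ₐ[ℂ] R).toRingHom := by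
      rw [I2, Ideal.span_le]
      intro q hq
      simp only [Set.mem_insert_iff, Set.mem_singleton_iff] at hq
      have hx4' : x * (x * (x * x)) = 0 := by
        rw [show x * (x * (x * x)) = x * x * x * x by ring, hx4]
      rcases hq with rfl | rfl | rfl | rfl | rfl <;>
        simp [RingHom.mem_ker, pow_two, hxy₁, hd, hx4', mul_assoc]
    exact hle hp
  · -- R3' case
    right
    obtain ⟨e, he⟩ := IsAlgClosed.exists_pow_nat_eq (k := ℂ) d⁻¹ (n := 2) (by norm_num)
    have hene : e ≠ 0 := by
      intro h; rw [h] at he; simp at he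
      exact hdne he.symm
    set y : R := e • y₁ with hy
    have hym : y ∈ m := by rw [hy, Algebra.smul_def]; exact Ideal.mul_mem_left _ _ hy₁m
    have hyW : y ∉ W := by
      intro h
      apply hy₁W
      have : y₁ = e⁻¹ • y := by rw [hy, smul_smul, inv_mul_cancel₀ hene, one_smul]
      rw [this]; exact smul_mem _ _ h
    have hxy : x * y = 0 := by rw [hy, mul_smul_comm, hxy₁, smul_zero]
    have hysq : y * y = x * x * x := by
      rw [hy, smul_mul_smul_comm, hd, smul_smul]
      rw [show e * e = e ^ 2 by ring, he, inv_mul_cancel₀ hdne, one_smul]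
    have hyx2 : y * (x * x) = 0 := by
      rw [show y * (x * x) = (x * y) * x by ring, hxy, zero_mul]
    refine iso_of_quot I3' (quot_span_aux I3' I3'_prods) x y h5 (hspan_gen y hym hyW) ?_
    intro p hp
    have hle : I3' ≤ RingHom.ker (aeval ![x, y, x*x, x*x*x] : MvPolynomial (Fin 4) ℂ →ₐ[ℂ] R).toRingHom := by
      rw [I3', Ideal.span_le]
      intro q hq
      simp only [Set.mem_insert_iff, Set.mem_singleton_iff] at hq
      have hx4' : x * (x * (x * x)) = 0 := by
        rw [show x * (x * (x * x)) = x * x * x * x by ring, hx4]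
      rcases hq with rfl | rfl | rfl | rfl | rfl | rfl <;>
        simp [RingHom.mem_ker, pow_two, hxy, hysq, hyx2, hx4', mul_assoc]
    exact hle hp
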